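/- Let L : {0,…,d−1}² → {0,…,d−1} be a Latin square (each row and each column of L is a permutation of {0,…,d−1}), and for each j let H^j be a d×d complex Hadamard matrix. Define operators V_{ij} on ℂ^d by V_{ij}(e_k) = (1/1)·H^j_{k i} · e_{L(j,k)} (so V_{ij} is a monomial matrix whose nonzero entries are the entries of column i of H^j, placed according to the j-th row of L). Then {V_{ij} : i,j ∈ {0,…,d−1}} is a unitary error basis: each V_{ij} is unitary and tr(V_{ij}† V_{mn}) = d·δ_{im}δ_{jn}. -/

import Mathlib

/-- The shift-and-multiply operator `V i j` built from a Latin square `L` and a family of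
Hadamard matrices `H`: it sends `e k` to `H j k i • e (L j k)`. -/
def shiftMultiplyOp (d : ℕ) (L : Fin d → Fin d → Fin d)
    (H : Fin d → Matrix (Fin d) (Fin d) ℂ) (i j : Fin d) :
    Matrix (Fin d) (Fin d) ℂ :=
  Matrix.of fun r k => if r = L j k then (H j) k i else 0

/-- Shift-and-multiply construction: if `L` is a Latin square (each row and each column
is a permutation of `{0,…,d−1}`) and each `H j` is a complex Hadamard matrix, then the
`d²` monomial operators `V i j`, where `V i j (e k) = H j k i • e (L j k)`, form a
unitary error basis: each `V i j` is unitary and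
`tr((V i j)ᴴ · V m n) = d·δ_{im}·δ_{jn}`. -/
theorem shift_and_multiply_is_ueb (d : ℕ)
    (L : Fin d → Fin d → Fin d)
    (hrow : ∀ j, Function.Bijective (fun k => L j k))
    (hcol : ∀ k, Function.Bijective (fun j => L j k))
    (H : Fin d → Matrix (Fin d) (Fin d) ℂ)
    (hHmod : ∀ j k i, ‖(H j) k i‖ = 1)
    (hHunit : ∀ j, H j * (H j).conjTranspose = (d : ℂ) • 1) :
    (∀ i j, shiftMultiplyOp d L H i j ∈ Matrix.unitaryGroup (Fin d) ℂ) ∧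
    ∀ i j m n,
      Matrix.trace ((shiftMultiplyOp d L H i j).conjTranspose * shiftMultiplyOp d L H m n)
        = if i = m ∧ j = n then (d : ℂ) else 0 := by
  -- entry formula for (V i j)ᴴ * V m n
  have entry : ∀ i j m n a b,
      ((shiftMultiplyOp d L H i j).conjTranspose * shiftMultiplyOp d L H m n) a b
        = if L j a = L n b then (starRingEnd ℂ) ((H j) a i) * (H n) b m else 0 := by
    intro i j m n a b
    simp only [Matrix.mul_apply, Matrix.conjTranspose_apply, shiftMultiplyOp, Matrix.of_apply,
      mul_ite, mul_zero, ite_mul, zero_mul]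
    rw [Finset.sum_ite_eq' Finset.univ (L n b)]
    simp only [Finset.mem_univ, if_true, apply_ite (star : ℂ → ℂ), star_zero, ite_mul, zero_mul]
    simp [RCLike.star_def, eq_comm]
  have hmod2 : ∀ j a i, (starRingEnd ℂ) ((H j) a i) * (H j) a i = 1 := by
    intro j a i
    rw [mul_comm, Complex.mul_conj, Complex.normSq_eq_norm_sq, hHmod]
    norm_num
  -- Hᴴ H = d • 1
  have hHunit' : ∀ j, (H j).conjTranspose * H j = (d : ℂ) • 1 := by
    intro j
    rcases Nat.eq_zero_or_pos d with h0 | hd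
    · subst h0; ext a; exact absurd a.2 (by omega)
    have hdne : (d : ℂ) ≠ 0 := Nat.cast_ne_zero.mpr hd.ne'
    have h1 : H j * ((d : ℂ)⁻¹ • (H j).conjTranspose) = 1 := by
      rw [Matrix.mul_smul, hHunit, smul_smul, inv_mul_cancel₀ hdne, one_smul]
    have h2 := mul_eq_one_comm.mp h1
    calc (H j).conjTranspose * H j
        = (d : ℂ) • (((d : ℂ)⁻¹ • (H j).conjTranspose) * H j) := by
          rw [Matrix.smul_mul, smul_smul, mul_inv_cancel₀ hdne, one_smul]
      _ = (d : ℂ) • 1 := by rw [h2]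
  constructor
  · intro i j
    rw [Matrix.mem_unitaryGroup_iff']
    ext a b
    rw [Matrix.star_eq_conjTranspose, entry]
    by_cases hab : a = b
    · subst hab
      simp [hmod2]
    · have : L j a ≠ L j b := fun h => hab ((hrow j).injective h)
      simp [this, Matrix.one_apply_ne hab]
  · intro i j m n
    simp only [Matrix.trace, Matrix.diag, entry]
    by_cases hjn : j = n
    · subst hjn
      have : (∑ a, if L j a = L j a then (starRingEnd ℂ) ((H j) a i) * (H j) a m else 0)
          = ((H j).conjTranspose * H j) i m := by
        simp [Matrix.mul_apply, Matrix.conjTranspose_apply, RCLike.star_def]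
      rw [this, hHunit']
      by_cases him : i = m
      · subst him; simp [Matrix.one_apply]
      · simp [him, Matrix.one_apply_ne him]
    · have : ∀ a, L j a ≠ L n a := fun a h => hjn ((hcol a).injective h)
      simp [this, hjn]
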